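/- arXiv:1503.06877 — 4 statements merged into one kernel-verified Lean document; each statement's English description precedes it below -/
import Mathlib

section
/- Let p be a positive integer, let κ, κ⁻, κ⁺ : Fin p → ℝ with 0 < κ⁻ i ≤ κ i ≤ κ⁺ i for all i, and let ω : Fin n → ℝ be nonnegative lot sizes and D : Fin p → Fin n → ℝ nonnegative scaled distances (D i j = ω j · ‖v i − z j‖² in the application). For a cluster assignment c : Fin n → Fin p define f₂(c) = ∑_{i} (1 / ∑_{j : c j = i} ω j) · ∑_{j : c j = i} D i j and f₃(c) = ∑_{i} (1 / κ i) · ∑_{j : c j = i} D i j. Suppose every assignment c in a nonempty feasible set S satisfies κ⁻ i ≤ ∑_{j : c j = i} ω j ≤ κ⁺ i for all i. If π ∈ S minimizes f₃ over S and π' ∈ S minimizes f₂ over S, then f₂(π) ≤ (max_{i} κ i / κ⁻ i) · (max_{i} κ⁺ i / κ i) · f₂(π'). -/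
/-- Lemma 1 of the paper: the optimum of the surrogate objective `f₃` is a
`(max_i κ i / κ⁻ i) * (max_i κ⁺ i / κ i)`-approximation for the normed
least-squares objective `f₂`. -/
theorem stmt_0 (n p : ℕ) (hp : 0 < p)
    (κ κm κp : Fin p → ℝ)
    (hκ : ∀ i, 0 < κm i ∧ κm i ≤ κ i ∧ κ i ≤ κp i)
    (ω : Fin n → ℝ) (hω : ∀ j, 0 ≤ ω j)
    (D : Fin p → Fin n → ℝ) (hD : ∀ i j, 0 ≤ D i j)
    (f₂ f₃ : (Fin n → Fin p) → ℝ)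
    (hf₂ : ∀ c, f₂ c =
      ∑ i, (1 / ∑ j ∈ Finset.univ.filter (fun j => c j = i), ω j) *
        ∑ j ∈ Finset.univ.filter (fun j => c j = i), D i j)
    (hf₃ : ∀ c, f₃ c =
      ∑ i, (1 / κ i) * ∑ j ∈ Finset.univ.filter (fun j => c j = i), D i j)
    (S : Set (Fin n → Fin p)) (hS : S.Nonempty)
    (hfeas : ∀ c ∈ S, ∀ i,
      κm i ≤ ∑ j ∈ Finset.univ.filter (fun j => c j = i), ω j ∧
      ∑ j ∈ Finset.univ.filter (fun j => c j = i), ω j ≤ κp i)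
    (π π' : Fin n → Fin p) (hπS : π ∈ S) (hπ'S : π' ∈ S)
    (hπmin : ∀ c ∈ S, f₃ π ≤ f₃ c)
    (hπ'min : ∀ c ∈ S, f₂ π' ≤ f₂ c) :
    f₂ π ≤
      (Finset.univ.sup' (Finset.univ_nonempty_iff.mpr ⟨⟨0, hp⟩⟩)
          (fun i => κ i / κm i)) *
      (Finset.univ.sup' (Finset.univ_nonempty_iff.mpr ⟨⟨0, hp⟩⟩)
          (fun i => κp i / κ i)) * f₂ π' := by
  have ne : (Finset.univ : Finset (Fin p)).Nonempty := ⟨⟨0, hp⟩, Finset.mem_univ _⟩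
  set A : ℝ := Finset.univ.sup' ne (fun i => κ i / κm i) with hA
  set B : ℝ := Finset.univ.sup' ne (fun i => κp i / κ i) with hB
  show f₂ π ≤ A * B * f₂ π'
  have hκ0 : ∀ i, 0 < κ i := fun i => lt_of_lt_of_le (hκ i).1 (hκ i).2.1
  have hAle : ∀ i, κ i / κm i ≤ A :=
    fun i => Finset.le_sup' (fun i => κ i / κm i) (Finset.mem_univ i)
  have hBle : ∀ i, κp i / κ i ≤ B :=
    fun i => Finset.le_sup' (fun i => κp i / κ i) (Finset.mem_univ i)
  have hApos : 0 < A :=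
    lt_of_lt_of_le (div_pos (hκ0 ⟨0, hp⟩) (hκ ⟨0, hp⟩).1) (hAle ⟨0, hp⟩)
  have hT : ∀ (c : Fin n → Fin p) (i : Fin p),
      0 ≤ ∑ j ∈ Finset.univ.filter (fun j => c j = i), D i j := by
    intro c i
    exact Finset.sum_nonneg fun j _ => hD i j
  have h2le3 : ∀ c ∈ S, f₂ c ≤ A * f₃ c := by
    intro c hc
    rw [hf₂, hf₃, Finset.mul_sum]
    apply Finset.sum_le_sum
    intro i _
    set W := ∑ j ∈ Finset.univ.filter (fun j => c j = i), ω j with hWdef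
    set T := ∑ j ∈ Finset.univ.filter (fun j => c j = i), D i j with hTdef
    have hW : κm i ≤ W := (hfeas c hc i).1
    have hWpos : 0 < W := lt_of_lt_of_le (hκ i).1 hW
    have hTn : 0 ≤ T := hT c i
    have h1 : (1 / W) * T ≤ (1 / κm i) * T :=
      mul_le_mul_of_nonneg_right (one_div_le_one_div_of_le (hκ i).1 hW) hTn
    have h2 : (1 / κm i) * T = (κ i / κm i) * ((1 / κ i) * T) := by
      have h3 := (hκ i).1.ne'
      have h4 := (hκ0 i).ne'
      field_simp
    have h3 : (κ i / κm i) * ((1 / κ i) * T) ≤ A * ((1 / κ i) * T) :=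
      mul_le_mul_of_nonneg_right (hAle i)
        (mul_nonneg (one_div_nonneg.mpr (hκ0 i).le) hTn)
    calc (1 / W) * T ≤ (1 / κm i) * T := h1
      _ = (κ i / κm i) * ((1 / κ i) * T) := h2
      _ ≤ A * ((1 / κ i) * T) := h3
  have h3le2 : ∀ c ∈ S, f₃ c ≤ B * f₂ c := by
    intro c hc
    rw [hf₂, hf₃, Finset.mul_sum]
    apply Finset.sum_le_sum
    intro i _
    set W := ∑ j ∈ Finset.univ.filter (fun j => c j = i), ω j with hWdef
    set T := ∑ j ∈ Finset.univ.filter (fun j => c j = i), D i j with hTdef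
    have hW : W ≤ κp i := (hfeas c hc i).2
    have hWpos : 0 < W := lt_of_lt_of_le (hκ i).1 (hfeas c hc i).1
    have hTn : 0 ≤ T := hT c i
    have h1 : (1 / κ i) * T ≤ (κp i / κ i) * ((1 / W) * T) := by
      rw [← mul_assoc, div_mul_div_comm, mul_one]
      apply mul_le_mul_of_nonneg_right _ hTn
      rw [div_le_div_iff₀ (hκ0 i) (mul_pos (hκ0 i) hWpos)]
      calc 1 * (κ i * W) = W * κ i := by ring
        _ ≤ κp i * κ i := mul_le_mul_of_nonneg_right hW (hκ0 i).le
    have h2 : (κp i / κ i) * ((1 / W) * T) ≤ B * ((1 / W) * T) :=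
      mul_le_mul_of_nonneg_right (hBle i)
        (mul_nonneg (one_div_nonneg.mpr hWpos.le) hTn)
    exact h1.trans h2
  calc f₂ π ≤ A * f₃ π := h2le3 π hπS
    _ ≤ A * f₃ π' := mul_le_mul_of_nonneg_left (hπmin π' hπ'S) hApos.le
    _ ≤ A * (B * f₂ π') := mul_le_mul_of_nonneg_left (h3le2 π' hπ'S) hApos.le
    _ = A * B * f₂ π' := by ring
end

section
/- Let p be a positive integer, κ, κ⁺ : Fin p → ℝ with 0 < κ i ≤ κ⁺ i for all i, ω : Fin n → ℝ nonnegative and D : Fin p → Fin n → ℝ nonnegative. For a cluster assignment c : Fin n → Fin p define f₂(c) = ∑_{i} (1 / ∑_{j : c j = i} ω j) · ∑_{j : c j = i} D i j and f₃(c) = ∑_{i} (1 / κ i) · ∑_{j : c j = i} D i j. If the assignment c satisfies 0 < ∑_{j : c j = i} ω j ≤ κ⁺ i for all i, then f₃(c) ≤ (max_{i} κ⁺ i / κ i) · f₂(c). -/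
/-- Second inequality in the proof of Lemma 1: `f₃ c ≤ (max_i κ⁺ i / κ i) * f₂ c`. -/
theorem stmt_2 (n p : ℕ) (hp : 0 < p)
    (κ κp : Fin p → ℝ)
    (hκ : ∀ i, 0 < κ i ∧ κ i ≤ κp i)
    (ω : Fin n → ℝ) (hω : ∀ j, 0 ≤ ω j)
    (D : Fin p → Fin n → ℝ) (hD : ∀ i j, 0 ≤ D i j)
    (f₂ f₃ : (Fin n → Fin p) → ℝ)
    (hf₂ : ∀ c, f₂ c =
      ∑ i, (1 / ∑ j ∈ Finset.univ.filter (fun j => c j = i), ω j) *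
        ∑ j ∈ Finset.univ.filter (fun j => c j = i), D i j)
    (hf₃ : ∀ c, f₃ c =
      ∑ i, (1 / κ i) * ∑ j ∈ Finset.univ.filter (fun j => c j = i), D i j)
    (c : Fin n → Fin p)
    (hc : ∀ i, 0 < ∑ j ∈ Finset.univ.filter (fun j => c j = i), ω j ∧
      ∑ j ∈ Finset.univ.filter (fun j => c j = i), ω j ≤ κp i) :
    f₃ c ≤
      (Finset.univ.sup' (Finset.univ_nonempty_iff.mpr ⟨⟨0, hp⟩⟩)
          (fun i => κp i / κ i)) * f₂ c := by

  set M := (Finset.univ.sup' (Finset.univ_nonempty_iff.mpr ⟨⟨0, hp⟩⟩)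
      (fun i => κp i / κ i)) with hM
  rw [hf₂, hf₃, Finset.mul_sum]
  apply Finset.sum_le_sum
  intro i _
  set W := ∑ j ∈ Finset.univ.filter (fun j => c j = i), ω j with hW
  set S := ∑ j ∈ Finset.univ.filter (fun j => c j = i), D i j with hS
  have hSnn : 0 ≤ S := Finset.sum_nonneg fun j _ => hD i j
  have hWpos : 0 < W := (hc i).1
  have hκi := (hκ i).1
  have hMi : κp i / κ i ≤ M := by rw [hM]; exact Finset.le_sup' (fun i => κp i / κ i) (Finset.mem_univ i)
  have hWle : W ≤ M * κ i := by
    calc W ≤ κp i := (hc i).2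
    _ = (κp i / κ i) * κ i := by field_simp
    _ ≤ M * κ i := by nlinarith
  have h1 : 1 / κ i ≤ M * (1 / W) := by
    rw [mul_one_div, div_le_div_iff₀ hκi hWpos]
    nlinarith
  calc (1 / κ i) * S ≤ (M * (1 / W)) * S := by nlinarith
  _ = M * ((1 / W) * S) := by ring
end

section
/- Let p be a positive integer, κ : Fin p → ℝ with κ i > 0 for all i, and set κ⁻ i = 0.97 · κ i and κ⁺ i = 1.03 · κ i. Let ω : Fin n → ℝ be nonnegative and D : Fin p → Fin n → ℝ nonnegative, and define f₂ and f₃ on assignments c : Fin n → Fin p by f₂(c) = ∑_{i} (1 / ∑_{j : c j = i} ω j) · ∑_{j : c j = i} D i j and f₃(c) = ∑_{i} (1 / κ i) · ∑_{j : c j = i} D i j. Suppose every assignment in a nonempty feasible set S satisfies κ⁻ i ≤ ∑_{j : c j = i} ω j ≤ κ⁺ i for all i. If π ∈ S minimizes f₃ over S and π' ∈ S minimizes f₂ over S, then f₂(π) ≤ (103/97) · f₂(π'). -/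
/-- Instance of Lemma 1 for a 3% accepted deviation: the approximation factor
specializes to `(1/0.97) * 1.03 = 103/97`. -/
theorem stmt_3 (n p : ℕ) (hp : 0 < p)
    (κ : Fin p → ℝ) (hκ : ∀ i, 0 < κ i)
    (κm κp : Fin p → ℝ)
    (hκm : ∀ i, κm i = 0.97 * κ i) (hκp : ∀ i, κp i = 1.03 * κ i)
    (ω : Fin n → ℝ) (hω : ∀ j, 0 ≤ ω j)
    (D : Fin p → Fin n → ℝ) (hD : ∀ i j, 0 ≤ D i j)
    (f₂ f₃ : (Fin n → Fin p) → ℝ)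
    (hf₂ : ∀ c, f₂ c =
      ∑ i, (1 / ∑ j ∈ Finset.univ.filter (fun j => c j = i), ω j) *
        ∑ j ∈ Finset.univ.filter (fun j => c j = i), D i j)
    (hf₃ : ∀ c, f₃ c =
      ∑ i, (1 / κ i) * ∑ j ∈ Finset.univ.filter (fun j => c j = i), D i j)
    (S : Set (Fin n → Fin p)) (hS : S.Nonempty)
    (hfeas : ∀ c ∈ S, ∀ i,
      κm i ≤ ∑ j ∈ Finset.univ.filter (fun j => c j = i), ω j ∧
      ∑ j ∈ Finset.univ.filter (fun j => c j = i), ω j ≤ κp i)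
    (π π' : Fin n → Fin p) (hπS : π ∈ S) (hπ'S : π' ∈ S)
    (hπmin : ∀ c ∈ S, f₃ π ≤ f₃ c)
    (hπ'min : ∀ c ∈ S, f₂ π' ≤ f₂ c) :
    f₂ π ≤ (103 / 97) * f₂ π' := by

  have key1 : ∀ c ∈ S, f₂ c ≤ (1/0.97) * f₃ c := by
    intro c hc
    rw [hf₂, hf₃, Finset.mul_sum]
    apply Finset.sum_le_sum
    intro i _
    set w := ∑ j ∈ Finset.univ.filter (fun j => c j = i), ω j with hw
    set T := ∑ j ∈ Finset.univ.filter (fun j => c j = i), D i j with hT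
    have hT0 : 0 ≤ T := Finset.sum_nonneg fun j _ => hD i j
    have hlow : 0.97 * κ i ≤ w := by
      have := (hfeas c hc i).1; rw [hκm] at this; exact this
    have hκi := hκ i
    have hw0 : 0 < w := by nlinarith
    calc (1/w)*T ≤ (1/(0.97*κ i))*T :=
            mul_le_mul_of_nonneg_right (one_div_le_one_div_of_le (by positivity) hlow) hT0
         _ = 1/0.97 * (1/κ i * T) := by rw [one_div, mul_inv]; ring
  have key2 : ∀ c ∈ S, f₃ c ≤ 1.03 * f₂ c := by
    intro c hc
    rw [hf₂, hf₃, Finset.mul_sum]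
    apply Finset.sum_le_sum
    intro i _
    set w := ∑ j ∈ Finset.univ.filter (fun j => c j = i), ω j with hw
    set T := ∑ j ∈ Finset.univ.filter (fun j => c j = i), D i j with hT
    have hT0 : 0 ≤ T := Finset.sum_nonneg fun j _ => hD i j
    have hhigh : w ≤ 1.03 * κ i := by
      have := (hfeas c hc i).2; rw [hκp] at this; exact this
    have hlow : 0.97 * κ i ≤ w := by
      have := (hfeas c hc i).1; rw [hκm] at this; exact this
    have hκi := hκ i
    have hw0 : 0 < w := by nlinarith
    have hd : 1/κ i ≤ 1.03/w := by
      rw [div_le_div_iff₀ hκi hw0]; nlinarith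
    calc 1/κ i * T ≤ (1.03/w)*T := mul_le_mul_of_nonneg_right hd hT0
         _ = 1.03 * (1/w * T) := by ring
  have h1 := key1 π hπS
  have h2 := hπmin π' hπ'S
  have h3 := key2 π' hπ'S
  have : (103:ℝ)/97 = (1/0.97) * 1.03 := by norm_num
  rw [this]
  nlinarith [h1, h2, h3]
end

section
/- Let n, p, m be positive integers, w : Fin m → Fin p → ℤ, t : Fin n → Fin m, and u : Fin n → Fin m → Fin p → ℤ defined by u j i k = 1 if i = t j and u j i k = 0 otherwise. Suppose x : Fin n → Fin m → Fin p → ℤ satisfies 0 ≤ x j i k ≤ u j i k for all j, i, k, and ∑_{i} ∑_{k} x j i k = 1 for every j. Then there exists a unique cluster assignment c : Fin n → Fin p such that x j i k = 1 if i = t j and k = c j, and x j i k = 0 otherwise; moreover, for this c and every k one has ∑_{j} ∑_{i} (w i k) · (x j i k) = ∑_{j : c j = k} w (t j) k. -/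
/-- Converse direction of the reduction in the proof of Theorem 1: every
integral vector feasible for the constructed `n`-fold system decodes to a
unique cluster assignment, and the `A₁`-block equations compute the cluster
weights. -/
theorem stmt_10 (n p m : ℕ) (hn : 0 < n) (hp : 0 < p) (hm : 0 < m)
    (w : Fin m → Fin p → ℤ) (t : Fin n → Fin m)
    (u : Fin n → Fin m → Fin p → ℤ)
    (hu : ∀ j i k, u j i k = if i = t j then 1 else 0)
    (x : Fin n → Fin m → Fin p → ℤ)
    (hbnd : ∀ j i k, 0 ≤ x j i k ∧ x j i k ≤ u j i k)
    (hsum : ∀ j, ∑ i, ∑ k, x j i k = 1) :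
    (∃! c : Fin n → Fin p,
      ∀ j i k, x j i k = if i = t j ∧ k = c j then 1 else 0) ∧
    (∀ c : Fin n → Fin p,
      (∀ j i k, x j i k = if i = t j ∧ k = c j then 1 else 0) →
      ∀ k, ∑ j, ∑ i, w i k * x j i k =
        ∑ j ∈ Finset.univ.filter (fun j => c j = k), w (t j) k) := by
  have hzero : ∀ j i k, i ≠ t j → x j i k = 0 := by
    intro j i k hij
    have h := hbnd j i k
    have h2 := hu j i k
    rw [if_neg hij] at h2
    omega
  have hsum' : ∀ j, ∑ k, x j (t j) k = 1 := by
    intro j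
    have h := hsum j
    rw [Finset.sum_eq_single (t j)] at h
    · exact h
    · intro i _ hi; exact Finset.sum_eq_zero (fun k _ => hzero j i k hi)
    · intro h'; exact absurd (Finset.mem_univ _) h'
  have hexists : ∀ j, ∃ k, x j (t j) k = 1 := by
    intro j
    by_contra h
    push_neg at h
    have hz : ∑ k, x j (t j) k = 0 := Finset.sum_eq_zero (fun k _ => by
      have hb := hbnd j (t j) k
      have hu' := hu j (t j) k
      rw [if_pos rfl] at hu'
      have := h k
      omega)
    rw [hsum' j] at hz
    exact one_ne_zero hz
  set c : Fin n → Fin p := fun j => (hexists j).choose with hcdef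
  have hc : ∀ j, x j (t j) (c j) = 1 := fun j => (hexists j).choose_spec
  have hrest : ∀ j k, k ≠ c j → x j (t j) k = 0 := by
    intro j k hk
    have h1 : ∑ k' ∈ Finset.univ.erase (c j), x j (t j) k' = 0 := by
      have h := hsum' j
      rw [← Finset.add_sum_erase _ _ (Finset.mem_univ (c j)), hc j] at h
      linarith
    have hnn : ∀ k' ∈ Finset.univ.erase (c j), 0 ≤ x j (t j) k' :=
      fun k' _ => (hbnd j (t j) k').1
    exact (Finset.sum_eq_zero_iff_of_nonneg hnn).mp h1 k
      (Finset.mem_erase.mpr ⟨hk, Finset.mem_univ k⟩)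
  have hchar : ∀ j i k, x j i k = if i = t j ∧ k = c j then 1 else 0 := by
    intro j i k
    by_cases hi : i = t j
    · subst hi
      by_cases hk : k = c j
      · subst hk; simp [hc j]
      · simp [hk, hrest j k hk]
    · simp [hi, hzero j i k hi]
  constructor
  · refine ⟨c, hchar, ?_⟩
    intro c' hc'
    funext j
    have h1 := hc' j (t j) (c j)
    rw [hc j] at h1
    by_contra hne
    rw [if_neg (fun h => hne h.2.symm)] at h1
    exact one_ne_zero h1
  · intro c' hc' k
    have inner : ∀ j, ∑ i, w i k * x j i k = if c' j = k then w (t j) k else 0 := by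
      intro j
      rw [Finset.sum_eq_single (t j)]
      · rw [hc' j (t j) k]
        by_cases h : k = c' j
        · simp [h]
        · rw [if_neg (fun hh => h hh.2), if_neg (fun hh => h hh.symm)]; ring
      · intro i _ hi
        rw [hc' j i k, if_neg (fun hh => hi hh.1)]; ring
      · intro h'; exact absurd (Finset.mem_univ _) h'
    rw [Finset.sum_congr rfl (fun j _ => inner j), Finset.sum_filter]
end
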